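/- Let Q be a quandle, n ≥ 1, and let f : Qⁿ → Qⁿ be any map. Define F : Q^{n+1} → Q^{n+1} by F(x_1, …, x_n, x_{n+1}) = σ_n( f(x_1, …, x_n), x_{n+1} ), where σ_n : Q^{n+1} → Q^{n+1} sends (y_1, …, y_n, y_{n+1}) to (y_1, …, y_{n−1}, y_{n+1}, y_n ⋆ y_{n+1}). Then (x_1, …, x_{n+1}) is a fixed point of F if and only if x_{n+1} = x_n and (x_1, …, x_n) is a fixed point of f. In particular, the projection onto the first n coordinates restricts to a bijection from the fixed-point set of F onto the fixed-point set of f. -/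
import Mathlib


/-- Positive stabilization step of Markov invariance. Let `Q` be a quandle and
`f : Qᴺ → Qᴺ` any map (here `N = n+1 ≥ 1`). Let `σ` be the elementary braid map
on `Q^{N+1}` acting on the last two coordinates,
`σ(y₁,…,y_N,y_{N+1}) = (y₁,…,y_{N−1}, y_{N+1}, y_N ⋆ y_{N+1})`, and let
`F(x₁,…,x_N,x_{N+1}) = σ(f(x₁,…,x_N), x_{N+1})`. Then `x` is a fixed point of
`F` iff its last coordinate equals its `N`-th one and `(x₁,…,x_N)` is a fixed
point of `f`; in particular, projection onto the first `N` coordinates is a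
bijection from the fixed-point set of `F` onto that of `f`. -/
theorem markov_positive_stabilization (Q : Type*) (op : Q → Q → Q)
    (hdist : ∀ a b c : Q, op (op a b) c = op (op a c) (op b c))
    (hidem : ∀ a : Q, op a a = a)
    (hbij : ∀ b : Q, Function.Bijective (fun a : Q => op a b))
    (n : ℕ)
    (f : (Fin (n + 1) → Q) → (Fin (n + 1) → Q))
    (σ : (Fin (n + 2) → Q) → (Fin (n + 2) → Q))
    (hσ : ∀ (y : Fin (n + 2) → Q) (j : Fin (n + 2)),
      σ y j =
        if j = (⟨n, by omega⟩ : Fin (n + 2)) then y ⟨n + 1, by omega⟩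
        else if j = (⟨n + 1, by omega⟩ : Fin (n + 2)) then
          op (y ⟨n, by omega⟩) (y ⟨n + 1, by omega⟩)
        else y j)
    (F : (Fin (n + 2) → Q) → (Fin (n + 2) → Q))
    (hF : ∀ x : Fin (n + 2) → Q,
      F x = σ (Fin.snoc (f (Fin.init x)) (x (Fin.last (n + 1))))) :
    (∀ x : Fin (n + 2) → Q,
      F x = x ↔ (x (Fin.last (n + 1)) = x (⟨n, by omega⟩ : Fin (n + 2)) ∧
        f (Fin.init x) = Fin.init x)) ∧
    Set.BijOn (fun x : Fin (n + 2) → Q => Fin.init x)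
      {x | F x = x} {x | f x = x} := by
  have hmk : (⟨n, by omega⟩ : Fin (n+2)) = Fin.castSucc (Fin.last n) := rfl
  have hmk2 : (⟨n+1, by omega⟩ : Fin (n+2)) = Fin.last (n+1) := rfl
  -- compute F x at the three kinds of coordinates
  have hFn : ∀ x : Fin (n+2) → Q, F x ⟨n, by omega⟩ = x (Fin.last (n+1)) := by
    intro x
    rw [hF, hσ]
    simp [hmk2]
  have hFlast : ∀ x : Fin (n+2) → Q,
      F x (Fin.last (n+1)) = op (f (Fin.init x) (Fin.last n)) (x (Fin.last (n+1))) := by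
    intro x
    rw [hF, hσ]
    have h1 : (Fin.last (n+1) : Fin (n+2)) ≠ ⟨n, by omega⟩ := by
      simp [Fin.ext_iff]
    rw [if_neg h1, if_pos hmk2.symm, hmk, hmk2]
    simp
  have hFmid : ∀ (x : Fin (n+2) → Q) (j : Fin (n+1)), j ≠ Fin.last n →
      F x (Fin.castSucc j) = f (Fin.init x) j := by
    intro x j hj
    rw [hF, hσ]
    have h1 : (Fin.castSucc j : Fin (n+2)) ≠ ⟨n, by omega⟩ := by
      simp [Fin.ext_iff]
      intro h
      exact hj (Fin.ext h)
    have h2 : (Fin.castSucc j : Fin (n+2)) ≠ ⟨n+1, by omega⟩ := by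
      simp [Fin.ext_iff]; omega
    rw [if_neg h1, if_neg h2]
    simp
  have key : ∀ x : Fin (n + 2) → Q,
      F x = x ↔ (x (Fin.last (n + 1)) = x (⟨n, by omega⟩ : Fin (n + 2)) ∧
        f (Fin.init x) = Fin.init x) := by
    intro x
    constructor
    · intro h
      have e1 : x (Fin.last (n+1)) = x ⟨n, by omega⟩ := by
        rw [← hFn x, h]
      have e2 : op (f (Fin.init x) (Fin.last n)) (x (Fin.last (n+1))) = x (Fin.last (n+1)) := by
        rw [← hFlast x, h]
      have e3 : f (Fin.init x) (Fin.last n) = x (Fin.last (n+1)) := by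
        apply (hbij (x (Fin.last (n+1)))).1
        show op _ _ = op _ _
        rw [e2, hidem]
      refine ⟨e1, funext fun j => ?_⟩
      by_cases hj : j = Fin.last n
      · subst hj
        rw [e3]
        show _ = x (Fin.castSucc (Fin.last n))
        rw [← hmk, e1]
      · rw [← hFmid x j hj, h]
        rfl
    · rintro ⟨e1, e2⟩
      funext j
      rcases Fin.eq_castSucc_or_eq_last j with ⟨i, rfl⟩ | rfl
      · by_cases hi : i = Fin.last n
        · subst hi
          rw [← hmk, hFn x, e1]
        · rw [hFmid x i hi, e2]
          rfl
      · rw [hFlast x, e2]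
        show op (Fin.init x (Fin.last n)) _ = _
        have : Fin.init x (Fin.last n) = x (Fin.last (n+1)) := by
          show x (Fin.castSucc (Fin.last n)) = _
          rw [← hmk, e1]
        rw [this, hidem]
  refine ⟨key, ?_, ?_, ?_⟩
  · intro x hx
    exact ((key x).1 hx).2
  · intro x hx y hy hxy
    have hx' := (key x).1 hx
    have hy' := (key y).1 hy
    have hxy' : Fin.init x = Fin.init y := hxy
    have hlast : x (Fin.last (n+1)) = y (Fin.last (n+1)) := by
      rw [hx'.1, hy'.1, hmk]
      exact congrFun hxy' _
    funext j
    rcases Fin.eq_castSucc_or_eq_last j with ⟨i, rfl⟩ | rfl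
    · exact congrFun hxy' i
    · exact hlast
  · intro y hy
    refine ⟨Fin.snoc y (y (Fin.last n)), ?_, ?_⟩
    · have hinit : Fin.init (Fin.snoc y (y (Fin.last n)) : Fin (n+2) → Q) = y :=
        Fin.init_snoc _ _
      refine (key _).2 ⟨?_, ?_⟩
      · rw [hmk]
        simp
      · rw [hinit]; exact hy
    · exact Fin.init_snoc _ _
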